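/- With the conditional mean c^opt over the interval of length Δ centered at x_i, the local squared error satisfies ∫_{x_i−Δ/2}^{x_i+Δ/2} (c^opt − β(x))² p(x) dx = (1/12)(β'(x_i))² p(x_i) Δ³ + o(Δ³) as Δ → 0. -/

import Mathlib

set_option maxHeartbeats 1000000

open MeasureTheory Filter Topology Asymptotics

open intervalIntegral in
private lemma perDelta (xi : ℝ) (β p : ℝ → ℝ) (β₁ p₀ M L P : ℝ) (Δ : ℝ)
    (hΔ : 0 < Δ) (hΔ1 : Δ ≤ 1)
    (hM : 0 ≤ M) (hL : 0 ≤ L) (hP : 0 ≤ P)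
    (hp₀ : 0 < p₀)
    (hβc : ContinuousOn β (Set.Icc (xi - Δ / 2) (xi + Δ / 2)))
    (hpc : ContinuousOn p (Set.Icc (xi - Δ / 2) (xi + Δ / 2)))
    (hpnn : ∀ x ∈ Set.Icc (xi - Δ / 2) (xi + Δ / 2), 0 ≤ p x)
    (hPb : ∀ x ∈ Set.Icc (xi - Δ / 2) (xi + Δ / 2), p x ≤ P)
    (hlip : ∀ x ∈ Set.Icc (xi - Δ / 2) (xi + Δ / 2), |p x - p₀| ≤ L * Δ)
    (hplow : ∀ x ∈ Set.Icc (xi - Δ / 2) (xi + Δ / 2), p₀ / 2 ≤ p x)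
    (htay : ∀ x ∈ Set.Icc (xi - Δ / 2) (xi + Δ / 2),
      |β x - β xi - β₁ * (x - xi)| ≤ M * Δ ^ 2) :
    |(∫ x in (xi - Δ / 2)..(xi + Δ / 2),
        ((∫ y in (xi - Δ / 2)..(xi + Δ / 2), β y * p y) /
         (∫ y in (xi - Δ / 2)..(xi + Δ / 2), p y) - β x) ^ 2 * p x)
      - (1 / 12) * β₁ ^ 2 * p₀ * Δ ^ 3|
    ≤ ((M * (2 * |β₁| + M) * P + β₁ ^ 2 * L) + 2 * (M * P + |β₁| * L) ^ 2 / p₀) * Δ ^ 4 := by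
  set a := xi - Δ / 2 with ha
  set b := xi + Δ / 2 with hb
  have hab : a ≤ b := by rw [ha, hb]; linarith
  have hba : b - a = Δ := by rw [ha, hb]; ring
  have huIcc : Set.uIcc a b = Set.Icc a b := Set.uIcc_of_le hab
  have huIoc : Set.uIoc a b = Set.Ioc a b := Set.uIoc_of_le hab
  have hIocsub : Set.Ioc a b ⊆ Set.Icc a b := Set.Ioc_subset_Icc_self
  have hxiI : xi ∈ Set.Icc a b := by
    constructor <;> [rw [ha]; rw [hb]] <;> linarith
  -- continuity helpers
  have hgc : ContinuousOn (fun x => β x - β xi) (Set.Icc a b) := hβc.sub continuousOn_const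
  have intp : IntervalIntegrable p volume a b := (huIcc ▸ hpc).intervalIntegrable
  have intgp : IntervalIntegrable (fun x => (β x - β xi) * p x) volume a b :=
    (huIcc ▸ (hgc.mul hpc)).intervalIntegrable
  have intg2p : IntervalIntegrable (fun x => (β x - β xi) ^ 2 * p x) volume a b :=
    (huIcc ▸ (((hgc.pow 2)).mul hpc)).intervalIntegrable
  have intβp : IntervalIntegrable (fun x => β x * p x) volume a b :=
    (huIcc ▸ (hβc.mul hpc)).intervalIntegrable
  have intcp : ∀ c : ℝ, IntervalIntegrable (fun x => c * p x) volume a b := fun c =>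
    (huIcc ▸ (continuousOn_const.mul hpc)).intervalIntegrable
  have intcgp : ∀ c : ℝ, IntervalIntegrable (fun x => c * ((β x - β xi) * p x)) volume a b :=
    fun c => (huIcc ▸ (continuousOn_const.mul (hgc.mul hpc))).intervalIntegrable
  have intsq : IntervalIntegrable (fun x : ℝ => (x - xi) ^ 2) volume a b :=
    (((continuousOn_id.sub continuousOn_const).pow 2)).intervalIntegrable
  have intlin : IntervalIntegrable (fun x : ℝ => β₁ * p₀ * (x - xi)) volume a b :=
    (continuousOn_const.mul (continuousOn_id.sub continuousOn_const)).intervalIntegrable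
  have intsqc : IntervalIntegrable (fun x : ℝ => β₁ ^ 2 * p₀ * (x - xi) ^ 2) volume a b :=
    (continuousOn_const.mul ((continuousOn_id.sub continuousOn_const).pow 2)).intervalIntegrable
  set I0 := ∫ x in a..b, p x with hI0
  set Jg := ∫ x in a..b, (β x - β xi) * p x with hJg
  set Kg := ∫ x in a..b, (β x - β xi) ^ 2 * p x with hKg
  -- lower bound for I0
  have hI0low : p₀ / 2 * Δ ≤ I0 := by
    have h1 : (∫ _x in a..b, (p₀ / 2 : ℝ)) = p₀ / 2 * Δ := by
      rw [intervalIntegral.integral_const, smul_eq_mul, hba]; ring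
    rw [← h1]
    exact integral_mono_on hab (by exact intervalIntegrable_const) intp hplow
  have hI0pos : 0 < I0 := lt_of_lt_of_le (by positivity) hI0low
  have hI0ne : I0 ≠ 0 := ne_of_gt hI0pos
  -- exact moment integrals
  have h1int : (∫ x in a..b, (x - xi)) = 0 := by
    rw [intervalIntegral.integral_comp_sub_right (fun x => x) xi, integral_id]
    rw [ha, hb]; ring
  have h2int : (∫ x in a..b, (x - xi) ^ 2) = Δ ^ 3 / 12 := by
    rw [intervalIntegral.integral_comp_sub_right (fun x => x ^ 2) xi, integral_pow]
    rw [ha, hb]; push_cast; ring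
  -- J = Jg + β xi * I0
  have hJ : (∫ x in a..b, β x * p x) = Jg + β xi * I0 := by
    have h1 : (∫ x in a..b, ((β x - β xi) * p x + β xi * p x)) = Jg + β xi * I0 := by
      rw [integral_add intgp (intcp (β xi)), intervalIntegral.integral_const_mul]
    rw [← h1]
    exact integral_congr fun x _ => by ring
  -- the quadratic identity
  have hFid : (∫ x in a..b, ((∫ y in a..b, β y * p y) / I0 - β x) ^ 2 * p x)
      = Kg - Jg ^ 2 / I0 := by
    set cg := Jg / I0 with hcg
    have hc' : (∫ y in a..b, β y * p y) / I0 = cg + β xi := by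
      rw [hJ, hcg]; field_simp
    calc (∫ x in a..b, ((∫ y in a..b, β y * p y) / I0 - β x) ^ 2 * p x)
        = ∫ x in a..b, (cg ^ 2 * p x - 2 * cg * ((β x - β xi) * p x)
            + (β x - β xi) ^ 2 * p x) := by
          refine integral_congr fun x _ => ?_
          rw [hc']; ring
      _ = (cg ^ 2 * I0 - 2 * cg * Jg) + Kg := by
          rw [integral_add ((intcp _).sub (intcgp _)) intg2p,
            integral_sub (intcp _) (intcgp _), intervalIntegral.integral_const_mul, intervalIntegral.integral_const_mul]
      _ = Kg - Jg ^ 2 / I0 := by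
          rw [hcg]; field_simp; ring
  -- bound on Jg
  have hE1 : |Jg| ≤ (M * P + |β₁| * L) * Δ ^ 3 := by
    have hJg' : Jg = ∫ x in a..b, ((β x - β xi) * p x - β₁ * p₀ * (x - xi)) := by
      rw [integral_sub intgp intlin, intervalIntegral.integral_const_mul, h1int, mul_zero, sub_zero]
    rw [hJg', ← Real.norm_eq_abs]
    have hbd : ∀ x ∈ Set.uIoc a b,
        ‖(β x - β xi) * p x - β₁ * p₀ * (x - xi)‖ ≤ (M * P + |β₁| * L) * Δ ^ 2 := by
      intro x hx
      have hxI : x ∈ Set.Icc a b := hIocsub (huIoc ▸ hx)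
      have h1 := htay x hxI
      have h2 := hlip x hxI
      have h3 : |x - xi| ≤ Δ / 2 := by
        rcases hxI with ⟨hxa, hxb⟩
        rw [ha] at hxa; rw [hb] at hxb
        rw [abs_le]; constructor <;> linarith
      have h4 := hpnn x hxI
      have h5 := hPb x hxI
      have key : (β x - β xi) * p x - β₁ * p₀ * (x - xi)
          = (β x - β xi - β₁ * (x - xi)) * p x + (β₁ * (x - xi)) * (p x - p₀) := by ring
      rw [Real.norm_eq_abs, key]
      calc |(β x - β xi - β₁ * (x - xi)) * p x + (β₁ * (x - xi)) * (p x - p₀)|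
          ≤ |β x - β xi - β₁ * (x - xi)| * |p x| + |β₁| * |x - xi| * |p x - p₀| := by
            refine (abs_add_le _ _).trans ?_
            rw [abs_mul, abs_mul, abs_mul]
        _ ≤ (M * Δ ^ 2) * P + |β₁| * (Δ / 2) * (L * Δ) := by
            have e1 : |p x| = p x := abs_of_nonneg h4
            rw [e1]
            have t1 : |β x - β xi - β₁ * (x - xi)| * p x ≤ (M * Δ ^ 2) * P :=
              mul_le_mul h1 h5 h4 (by positivity)
            have t2 : |β₁| * |x - xi| * |p x - p₀| ≤ |β₁| * (Δ / 2) * (L * Δ) :=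
              mul_le_mul (mul_le_mul le_rfl h3 (abs_nonneg _) (abs_nonneg _)) h2
                (abs_nonneg _) (by positivity)
            linarith
        _ ≤ (M * P + |β₁| * L) * Δ ^ 2 := by nlinarith [mul_nonneg (mul_nonneg (abs_nonneg β₁) hL) (sq_nonneg Δ)]
    have := norm_integral_le_of_norm_le_const hbd
    calc ‖∫ x in a..b, ((β x - β xi) * p x - β₁ * p₀ * (x - xi))‖
        ≤ (M * P + |β₁| * L) * Δ ^ 2 * |b - a| := this
      _ = (M * P + |β₁| * L) * Δ ^ 3 := by
          rw [hba, abs_of_pos hΔ]; ring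
  -- bound on Kg
  have hE2 : |Kg - β₁ ^ 2 * p₀ * (Δ ^ 3 / 12)| ≤ (M * (2 * |β₁| + M) * P + β₁ ^ 2 * L) * Δ ^ 4 := by
    have hKg' : Kg - β₁ ^ 2 * p₀ * (Δ ^ 3 / 12)
        = ∫ x in a..b, ((β x - β xi) ^ 2 * p x - β₁ ^ 2 * p₀ * (x - xi) ^ 2) := by
      rw [integral_sub intg2p intsqc, intervalIntegral.integral_const_mul, h2int]
    rw [hKg', ← Real.norm_eq_abs]
    have hbd : ∀ x ∈ Set.uIoc a b,
        ‖(β x - β xi) ^ 2 * p x - β₁ ^ 2 * p₀ * (x - xi) ^ 2‖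
          ≤ (M * (2 * |β₁| + M) * P + β₁ ^ 2 * L) * Δ ^ 3 := by
      intro x hx
      have hxI : x ∈ Set.Icc a b := hIocsub (huIoc ▸ hx)
      have h1 := htay x hxI
      have h2 := hlip x hxI
      have h3 : |x - xi| ≤ Δ / 2 := by
        rcases hxI with ⟨hxa, hxb⟩
        rw [ha] at hxa; rw [hb] at hxb
        rw [abs_le]; constructor <;> linarith
      have h4 := hpnn x hxI
      have h5 := hPb x hxI
      have hg : |β x - β xi| ≤ |β₁| * (Δ / 2) + M * Δ ^ 2 := by
        have e0 : β x - β xi = (β x - β xi - β₁ * (x - xi)) + β₁ * (x - xi) := by ring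
        calc |β x - β xi| = |(β x - β xi - β₁ * (x - xi)) + β₁ * (x - xi)| := by rw [← e0]
          _ ≤ |β x - β xi - β₁ * (x - xi)| + |β₁ * (x - xi)| := abs_add_le _ _
          _ ≤ M * Δ ^ 2 + |β₁| * (Δ / 2) := by
              rw [abs_mul]
              have t2 : |β₁| * |x - xi| ≤ |β₁| * (Δ / 2) :=
                mul_le_mul_of_nonneg_left h3 (abs_nonneg _)
              linarith
          _ = |β₁| * (Δ / 2) + M * Δ ^ 2 := by ring
      have key : (β x - β xi) ^ 2 * p x - β₁ ^ 2 * p₀ * (x - xi) ^ 2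
          = (β x - β xi - β₁ * (x - xi)) * ((β x - β xi) + β₁ * (x - xi)) * p x
            + (β₁ * (x - xi)) ^ 2 * (p x - p₀) := by ring
      rw [Real.norm_eq_abs, key]
      have hsum : |(β x - β xi) + β₁ * (x - xi)| ≤ (2 * |β₁| + M) * Δ := by
        calc |(β x - β xi) + β₁ * (x - xi)| ≤ |β x - β xi| + |β₁| * |x - xi| := by
              refine (abs_add_le _ _).trans ?_
              rw [abs_mul]
          _ ≤ (|β₁| * (Δ / 2) + M * Δ ^ 2) + |β₁| * (Δ / 2) := by
              have t2 : |β₁| * |x - xi| ≤ |β₁| * (Δ / 2) :=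
                mul_le_mul_of_nonneg_left h3 (abs_nonneg _)
              linarith
          _ ≤ (2 * |β₁| + M) * Δ := by nlinarith [mul_nonneg (abs_nonneg β₁) hΔ.le, mul_nonneg hM (mul_nonneg hΔ.le (by linarith : (0:ℝ) ≤ 1 - Δ))]
      calc |(β x - β xi - β₁ * (x - xi)) * ((β x - β xi) + β₁ * (x - xi)) * p x
            + (β₁ * (x - xi)) ^ 2 * (p x - p₀)|
          ≤ |β x - β xi - β₁ * (x - xi)| * |(β x - β xi) + β₁ * (x - xi)| * |p x|
            + (β₁ * (x - xi)) ^ 2 * |p x - p₀| := by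
            refine (abs_add_le _ _).trans ?_
            rw [abs_mul, abs_mul, abs_mul, abs_pow, sq_abs]
        _ ≤ (M * Δ ^ 2) * ((2 * |β₁| + M) * Δ) * P + (β₁ * (Δ / 2)) ^ 2 * (L * Δ) := by
            have e1 : |p x| = p x := abs_of_nonneg h4
            rw [e1]
            have hsq : (β₁ * (x - xi)) ^ 2 ≤ (β₁ * (Δ / 2)) ^ 2 := by
              rw [mul_pow, mul_pow, ← sq_abs (x - xi)]
              have h6 : |x - xi| ^ 2 ≤ (Δ / 2) ^ 2 := by
                have := mul_le_mul h3 h3 (abs_nonneg _) (by positivity)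
                nlinarith
              nlinarith [sq_nonneg β₁]
            have t1 : |β x - β xi - β₁ * (x - xi)| * |β x - β xi + β₁ * (x - xi)| * p x
                ≤ (M * Δ ^ 2) * ((2 * |β₁| + M) * Δ) * P := by
              refine mul_le_mul ?_ h5 h4 (by positivity)
              exact mul_le_mul h1 hsum (abs_nonneg _) (by positivity)
            have t2 : (β₁ * (x - xi)) ^ 2 * |p x - p₀| ≤ (β₁ * (Δ / 2)) ^ 2 * (L * Δ) :=
              mul_le_mul hsq h2 (abs_nonneg _) (by positivity)
            linarith
        _ ≤ (M * (2 * |β₁| + M) * P + β₁ ^ 2 * L) * Δ ^ 3 := by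
            nlinarith [abs_nonneg β₁, hΔ.le, sq_nonneg β₁, mul_nonneg hL hΔ.le,
              sq_nonneg (β₁ * Δ), mul_nonneg (mul_nonneg hL hΔ.le) (sq_nonneg β₁)]
    have := norm_integral_le_of_norm_le_const hbd
    calc ‖∫ x in a..b, ((β x - β xi) ^ 2 * p x - β₁ ^ 2 * p₀ * (x - xi) ^ 2)‖
        ≤ (M * (2 * |β₁| + M) * P + β₁ ^ 2 * L) * Δ ^ 3 * |b - a| := this
      _ = (M * (2 * |β₁| + M) * P + β₁ ^ 2 * L) * Δ ^ 4 := by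
          rw [hba, abs_of_pos hΔ]; ring
  -- bound on Jg^2 / I0
  have hE3 : Jg ^ 2 / I0 ≤ 2 * (M * P + |β₁| * L) ^ 2 / p₀ * Δ ^ 4 := by
    have hnum : Jg ^ 2 ≤ ((M * P + |β₁| * L) * Δ ^ 3) ^ 2 := by
      rw [← sq_abs Jg]
      have h0 : (0:ℝ) ≤ |Jg| := abs_nonneg _
      nlinarith [hE1]
    have hdiv : Jg ^ 2 / I0 ≤ ((M * P + |β₁| * L) * Δ ^ 3) ^ 2 / (p₀ / 2 * Δ) :=
      div_le_div₀ (by positivity) hnum (by positivity) hI0low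
    refine hdiv.trans ?_
    have heq : ((M * P + |β₁| * L) * Δ ^ 3) ^ 2 / (p₀ / 2 * Δ)
        = 2 * (M * P + |β₁| * L) ^ 2 / p₀ * Δ ^ 5 := by
      field_simp
    rw [heq]
    have h5 : Δ ^ 5 ≤ Δ ^ 4 := pow_le_pow_of_le_one hΔ.le hΔ1 (by norm_num)
    have hcn : (0:ℝ) ≤ 2 * (M * P + |β₁| * L) ^ 2 / p₀ := by positivity
    exact mul_le_mul_of_nonneg_left h5 hcn
  -- combine
  rw [hFid]
  have hre : Kg - Jg ^ 2 / I0 - 1 / 12 * β₁ ^ 2 * p₀ * Δ ^ 3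
      = (Kg - β₁ ^ 2 * p₀ * (Δ ^ 3 / 12)) - Jg ^ 2 / I0 := by ring
  rw [hre]
  calc |(Kg - β₁ ^ 2 * p₀ * (Δ ^ 3 / 12)) - Jg ^ 2 / I0|
      ≤ |Kg - β₁ ^ 2 * p₀ * (Δ ^ 3 / 12)| + |Jg ^ 2 / I0| := abs_sub _ _
    _ ≤ (M * (2 * |β₁| + M) * P + β₁ ^ 2 * L) * Δ ^ 4
        + 2 * (M * P + |β₁| * L) ^ 2 / p₀ * Δ ^ 4 := by
        have : |Jg ^ 2 / I0| = Jg ^ 2 / I0 := abs_of_nonneg (by positivity)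
        rw [this]
        exact add_le_add hE2 hE3
    _ = ((M * (2 * |β₁| + M) * P + β₁ ^ 2 * L) + 2 * (M * P + |β₁| * L) ^ 2 / p₀) * Δ ^ 4 := by
        ring

/-- With the conditional mean `cᵒᵖᵗ(Δ)` over the interval of length `Δ` centered
at `xᵢ`, the local squared error equals `(1/12)(β'(xᵢ))² p(xᵢ) Δ³ + o(Δ³)` as `Δ → 0⁺`. -/
theorem stmt8 (xi : ℝ) (β p : ℝ → ℝ) (r : ℝ) (hr : 0 < r)
    (hβ : ContDiffOn ℝ 2 β (Set.Ioo (xi - r) (xi + r)))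
    (hp : ContDiffOn ℝ 1 p (Set.Ioo (xi - r) (xi + r)))
    (hppos : 0 < p xi) (hpnn : 0 ≤ p)
    (copt : ℝ → ℝ)
    (hcopt : ∀ Δ : ℝ, copt Δ =
      (∫ x in (xi - Δ / 2)..(xi + Δ / 2), β x * p x) /
      (∫ x in (xi - Δ / 2)..(xi + Δ / 2), p x)) :
    (fun Δ : ℝ =>
        (∫ x in (xi - Δ / 2)..(xi + Δ / 2), (copt Δ - β x) ^ 2 * p x)
          - (1 / 12) * (deriv β xi) ^ 2 * p xi * Δ ^ 3)
      =o[𝓝[>] (0 : ℝ)] (fun Δ : ℝ => Δ ^ 3) := by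
  have hsopen : IsOpen (Set.Ioo (xi - r) (xi + r)) := isOpen_Ioo
  have hxis : xi ∈ Set.Ioo (xi - r) (xi + r) := ⟨by linarith, by linarith⟩
  have hKs : Set.Icc (xi - r / 2) (xi + r / 2) ⊆ Set.Ioo (xi - r) (xi + r) := by
    intro x hx
    rcases hx with ⟨h1, h2⟩
    exact ⟨by linarith, by linarith⟩
  have hKcp : IsCompact (Set.Icc (xi - r / 2) (xi + r / 2)) := isCompact_Icc
  have hxiK : xi ∈ Set.Icc (xi - r / 2) (xi + r / 2) := ⟨by linarith, by linarith⟩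
  -- derivative facts
  have hβdiff : ∀ x ∈ Set.Ioo (xi - r) (xi + r), HasDerivAt β (deriv β x) x := fun x hx =>
    ((hβ.differentiableOn (by norm_num)).differentiableAt (hsopen.mem_nhds hx)).hasDerivAt
  have hβ' : ContDiffOn ℝ 1 (deriv β) (Set.Ioo (xi - r) (xi + r)) :=
    hβ.deriv_of_isOpen hsopen (by norm_num)
  have hβ'diff : ∀ x ∈ Set.Ioo (xi - r) (xi + r),
      HasDerivAt (deriv β) (deriv (deriv β) x) x := fun x hx =>
    ((hβ'.differentiableOn (by norm_num)).differentiableAt (hsopen.mem_nhds hx)).hasDerivAt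
  have hβ''c : ContinuousOn (deriv (deriv β)) (Set.Ioo (xi - r) (xi + r)) :=
    hβ'.continuousOn_deriv_of_isOpen hsopen le_rfl
  have hpdiff : ∀ x ∈ Set.Ioo (xi - r) (xi + r), HasDerivAt p (deriv p x) x := fun x hx =>
    ((hp.differentiableOn (by norm_num)).differentiableAt (hsopen.mem_nhds hx)).hasDerivAt
  have hp'c : ContinuousOn (deriv p) (Set.Ioo (xi - r) (xi + r)) :=
    hp.continuousOn_deriv_of_isOpen hsopen le_rfl
  -- bounds on the compact set
  obtain ⟨M0, hM0⟩ := hKcp.exists_bound_of_continuousOn (hβ''c.mono hKs)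
  obtain ⟨L0, hL0⟩ := hKcp.exists_bound_of_continuousOn (hp'c.mono hKs)
  obtain ⟨P0, hP0⟩ := hKcp.exists_bound_of_continuousOn ((hp.continuousOn).mono hKs)
  set M := max M0 0 with hMdef
  set L := max L0 0 with hLdef
  set P := max P0 0 with hPdef
  have hM : (0:ℝ) ≤ M := le_max_right _ _
  have hL : (0:ℝ) ≤ L := le_max_right _ _
  have hP : (0:ℝ) ≤ P := le_max_right _ _
  have hMb : ∀ x ∈ Set.Icc (xi - r / 2) (xi + r / 2), ‖deriv (deriv β) x‖ ≤ M :=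
    fun x hx => (hM0 x hx).trans (le_max_left _ _)
  have hLb : ∀ x ∈ Set.Icc (xi - r / 2) (xi + r / 2), ‖deriv p x‖ ≤ L :=
    fun x hx => (hL0 x hx).trans (le_max_left _ _)
  have hPb : ∀ x ∈ Set.Icc (xi - r / 2) (xi + r / 2), p x ≤ P := fun x hx =>
    (le_abs_self _).trans ((hP0 x hx).trans (le_max_left _ _))
  -- Lipschitz bounds
  have hlipβ' : ∀ x ∈ Set.Icc (xi - r / 2) (xi + r / 2),
      |deriv β x - deriv β xi| ≤ M * |x - xi| := by
    intro x hx
    have := Convex.norm_image_sub_le_of_norm_hasDerivWithin_le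
      (f := deriv β) (f' := deriv (deriv β)) (C := M)
      (fun y hy => (hβ'diff y (hKs hy)).hasDerivWithinAt) hMb (convex_Icc _ _) hxiK hx
    simpa [Real.norm_eq_abs] using this
  have hlipp : ∀ x ∈ Set.Icc (xi - r / 2) (xi + r / 2), |p x - p xi| ≤ L * |x - xi| := by
    intro x hx
    have := Convex.norm_image_sub_le_of_norm_hasDerivWithin_le
      (f := p) (f' := deriv p) (C := L)
      (fun y hy => (hpdiff y (hKs hy)).hasDerivWithinAt) hLb (convex_Icc _ _) hxiK hx
    simpa [Real.norm_eq_abs] using this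
  set β₁ := deriv β xi with hβ₁def
  set p₀ := p xi with hp₀def
  set δ := min (min (r / 2) 1) (p₀ / (L + 1)) with hδdef
  have hδpos : 0 < δ :=
    lt_min (lt_min (by linarith) one_pos) (by positivity)
  set C := ((M * (2 * |β₁| + M) * P + β₁ ^ 2 * L) + 2 * (M * P + |β₁| * L) ^ 2 / p₀) with hCdef
  have key : ∀ Δ ∈ Set.Ioo (0:ℝ) δ,
      |(∫ x in (xi - Δ / 2)..(xi + Δ / 2), (copt Δ - β x) ^ 2 * p x)
        - (1 / 12) * β₁ ^ 2 * p₀ * Δ ^ 3| ≤ C * Δ ^ 4 := by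
    intro Δ hΔm
    obtain ⟨hΔ0, hΔδ⟩ := hΔm
    have hΔr : Δ ≤ r / 2 := hΔδ.le.trans ((min_le_left _ _).trans (min_le_left _ _))
    have hΔ1 : Δ ≤ 1 := hΔδ.le.trans ((min_le_left _ _).trans (min_le_right _ _))
    have hΔp : Δ ≤ p₀ / (L + 1) := hΔδ.le.trans (min_le_right _ _)
    have hΔpL : Δ * (L + 1) ≤ p₀ := by
      rw [← le_div_iff₀ (by positivity)]
      exact hΔp
    have hsub : Set.Icc (xi - Δ / 2) (xi + Δ / 2) ⊆ Set.Icc (xi - r / 2) (xi + r / 2) := by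
      intro x hx
      rcases hx with ⟨h1, h2⟩
      exact ⟨by linarith, by linarith⟩
    have habs : ∀ x ∈ Set.Icc (xi - Δ / 2) (xi + Δ / 2), |x - xi| ≤ Δ / 2 := by
      intro x hx
      rcases hx with ⟨h1, h2⟩
      rw [abs_le]
      constructor <;> linarith
    rw [hcopt]
    refine perDelta xi β p β₁ p₀ M L P Δ hΔ0 hΔ1 hM hL hP hppos
      ((hβ.continuousOn).mono (fun x hx => hKs (hsub hx)))
      ((hp.continuousOn).mono (fun x hx => hKs (hsub hx)))
      (fun x _ => hpnn x) (fun x hx => hPb x (hsub hx)) ?_ ?_ ?_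
    · -- Lipschitz bound for p
      intro x hx
      have h1 := hlipp x (hsub hx)
      have h2 := habs x hx
      have h3 : L * |x - xi| ≤ L * (Δ / 2) := mul_le_mul_of_nonneg_left h2 hL
      have h4 : L * (Δ / 2) ≤ L * Δ := by nlinarith
      linarith
    · -- lower bound for p
      intro x hx
      have h1 := hlipp x (hsub hx)
      have h2 := habs x hx
      have h3 : |p x - p₀| ≤ L * (Δ / 2) :=
        h1.trans (mul_le_mul_of_nonneg_left h2 hL)
      have h4 := (abs_le.1 h3).1
      have h5 : L * Δ ≤ p₀ := by nlinarith
      linarith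
    · -- Taylor bound
      intro x hx
      have hmemxi : xi ∈ Set.Icc (xi - Δ / 2) (xi + Δ / 2) := ⟨by linarith, by linarith⟩
      have hDeriv : ∀ t ∈ Set.Icc (xi - Δ / 2) (xi + Δ / 2),
          HasDerivWithinAt (fun y => β y - β₁ * y) (deriv β t - β₁)
            (Set.Icc (xi - Δ / 2) (xi + Δ / 2)) t := by
        intro t ht
        have h1 : HasDerivAt (fun y => β y - β₁ * y) (deriv β t - β₁ * 1) t :=
          (hβdiff t (hKs (hsub ht))).sub ((hasDerivAt_id t).const_mul β₁)
        simpa using h1.hasDerivWithinAt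
      have hDbound : ∀ t ∈ Set.Icc (xi - Δ / 2) (xi + Δ / 2),
          ‖deriv β t - β₁‖ ≤ M * Δ := by
        intro t ht
        have h1 := hlipβ' t (hsub ht)
        have h2 := habs t ht
        have h3 : M * |t - xi| ≤ M * (Δ / 2) := mul_le_mul_of_nonneg_left h2 hM
        rw [Real.norm_eq_abs]
        have h4 : M * (Δ / 2) ≤ M * Δ := by nlinarith
        calc |deriv β t - β₁| ≤ M * |t - xi| := h1
          _ ≤ M * Δ := h3.trans h4
      have := Convex.norm_image_sub_le_of_norm_hasDerivWithin_le
        hDeriv hDbound (convex_Icc _ _) hmemxi hx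
      rw [Real.norm_eq_abs, Real.norm_eq_abs] at this
      have heq : β x - β₁ * x - (β xi - β₁ * xi) = β x - β xi - β₁ * (x - xi) := by ring
      rw [heq] at this
      refine this.trans ?_
      have h2 := habs x hx
      have h3 : M * Δ * |x - xi| ≤ M * Δ * (Δ / 2) :=
        mul_le_mul_of_nonneg_left h2 (by positivity)
      nlinarith
  -- conclude
  have hbigO : (fun Δ : ℝ =>
        (∫ x in (xi - Δ / 2)..(xi + Δ / 2), (copt Δ - β x) ^ 2 * p x)
          - (1 / 12) * β₁ ^ 2 * p₀ * Δ ^ 3)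
      =O[𝓝[>] (0 : ℝ)] (fun Δ : ℝ => Δ ^ 4) := by
    rw [Asymptotics.isBigO_iff]
    refine ⟨C, ?_⟩
    filter_upwards [Ioo_mem_nhdsGT hδpos] with Δ hΔ
    have h1 := key Δ hΔ
    rw [Real.norm_eq_abs, Real.norm_eq_abs, abs_of_pos (pow_pos hΔ.1 4)]
    exact h1
  exact hbigO.trans_isLittleO
    ((Asymptotics.isLittleO_pow_pow (by norm_num : 3 < 4)).mono nhdsWithin_le_nhds)
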